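/- For any artin algebra A one has Fin-inj A ≤ del A, i.e. the big finitistic injective dimension of A is at most the delooping level of A. -/

import Mathlib

open CategoryTheory CategoryTheory.Limits

noncomputable section

namespace ArtinAlg

variable (A : Type) [Ring A]

/-- `M` admits a projective resolution of length at most `n`. -/
inductive ProjDimLE : ℕ → ModuleCat.{0} A → Prop
  | zero (M : ModuleCat.{0} A) (h : Projective M) : ProjDimLE 0 M
  | succ (n : ℕ) (M P : ModuleCat.{0} A) (f : P ⟶ M) (hP : Projective P) (hf : Epi f)
      (h : ProjDimLE n (kernel f)) : ProjDimLE (n + 1) M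

/-- `M` admits an injective coresolution of length at most `n`. -/
inductive InjDimLE : ℕ → ModuleCat.{0} A → Prop
  | zero (M : ModuleCat.{0} A) (h : Injective M) : InjDimLE 0 M
  | succ (n : ℕ) (M I : ModuleCat.{0} A) (f : M ⟶ I) (hI : Injective I) (hf : Mono f)
      (h : InjDimLE n (cokernel f)) : InjDimLE (n + 1) M

/-- The projective dimension `pd M ∈ ℕ∞`. -/
def projDim (M : ModuleCat.{0} A) : ℕ∞ :=
  sInf {d : ℕ∞ | ∃ n : ℕ, d = n ∧ ProjDimLE A n M}

/-- The injective dimension `id M ∈ ℕ∞`. -/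
def injDim (M : ModuleCat.{0} A) : ℕ∞ :=
  sInf {d : ℕ∞ | ∃ n : ℕ, d = n ∧ InjDimLE A n M}

/-- `f : P ⟶ M` is a projective cover: `P` is projective and `f` is an essential
(superfluous) epimorphism. -/
def IsProjectiveCoverHom {P M : ModuleCat.{0} A} (f : P ⟶ M) : Prop :=
  Projective P ∧ Epi f ∧ ∀ (N : ModuleCat.{0} A) (g : N ⟶ P), Epi (g ≫ f) → Epi g

/-- `P` is a projective cover of `M`. -/
def IsProjCoverOf (M P : ModuleCat.{0} A) : Prop :=
  ∃ f : P ⟶ M, IsProjectiveCoverHom A f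

/-- `f : M ⟶ I` is an injective envelope: `I` is injective and `f` is an essential
monomorphism. -/
def IsInjectiveEnvelopeHom {M I : ModuleCat.{0} A} (f : M ⟶ I) : Prop :=
  Injective I ∧ Mono f ∧ ∀ (N : ModuleCat.{0} A) (g : I ⟶ N), Mono (f ≫ g) → Mono g

/-- `I` is an injective envelope of `M`. -/
def IsInjEnvOf (M I : ModuleCat.{0} A) : Prop :=
  ∃ f : M ⟶ I, IsInjectiveEnvelopeHom A f

/-- `X ≅ Ω M`, the kernel of a projective cover of `M`. -/
def IsSyzygyOf (M X : ModuleCat.{0} A) : Prop :=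
  ∃ (P : ModuleCat.{0} A) (f : P ⟶ M), IsProjectiveCoverHom A f ∧ Nonempty (X ≅ kernel f)

/-- `X ≅ Σ M`, the cokernel of an injective envelope of `M`. -/
def IsCosyzygyOf (M X : ModuleCat.{0} A) : Prop :=
  ∃ (I : ModuleCat.{0} A) (f : M ⟶ I), IsInjectiveEnvelopeHom A f ∧ Nonempty (X ≅ cokernel f)

/-- `X ≅ Ω^n M`. -/
def IsNthSyzygy : ℕ → ModuleCat.{0} A → ModuleCat.{0} A → Prop
  | 0, M, X => Nonempty (X ≅ M)
  | n + 1, M, X => ∃ Y, IsSyzygyOf A M Y ∧ IsNthSyzygy n Y X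

/-- `X ≅ Σ^n M`. -/
def IsNthCosyzygy : ℕ → ModuleCat.{0} A → ModuleCat.{0} A → Prop
  | 0, M, X => Nonempty (X ≅ M)
  | n + 1, M, X => ∃ Y, IsCosyzygyOf A M Y ∧ IsNthCosyzygy n Y X

/-- `X` is a direct summand of `Y`. -/
def IsDirectSummandOf (X Y : ModuleCat.{0} A) : Prop :=
  ∃ (i : X ⟶ Y) (r : Y ⟶ X), i ≫ r = 𝟙 X

/-- `X ∈ add W` : `X` is a direct summand of a finite direct sum of copies of `W`. -/
def InAdd (X W : ModuleCat.{0} A) : Prop :=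
  ∃ n : ℕ, IsDirectSummandOf A X (ModuleCat.of A (Fin n → ↥W))

/-- The delooping level of `M` is at most `d` :
`Ω^d M ∈ add (A ⊕ Ω^{d+1} M')` for some finitely generated `M'`. -/
def DelLE (d : ℕ) (M : ModuleCat.{0} A) : Prop :=
  ∃ X, IsNthSyzygy A d M X ∧
    ∃ M' : ModuleCat.{0} A, Module.Finite A ↥M' ∧
      ∃ X', IsNthSyzygy A (d + 1) M' X' ∧ InAdd A X (ModuleCat.of A (A × ↥X'))

/-- The delooping level `del M ∈ ℕ∞`. -/
def delLevel (M : ModuleCat.{0} A) : ℕ∞ :=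
  sInf {d : ℕ∞ | ∃ n : ℕ, d = n ∧ DelLE A n M}

/-- The delooping level of the algebra: the supremum of `del S` over the simple modules. -/
def delAlg : ℕ∞ :=
  sSup {d : ℕ∞ | ∃ S : ModuleCat.{0} A, IsSimpleModule A ↥S ∧ delLevel A S = d}

/-- `Q` is a minimal injective cogenerator: the injective envelope of the direct sum of
a complete set of representatives of the simple modules. -/
def IsMinimalInjectiveCogenerator (Q : ModuleCat.{0} A) : Prop :=
  ∃ (ι : Type) (_ : Fintype ι) (S : ι → ModuleCat.{0} A),
    (∀ i, IsSimpleModule A ↥(S i)) ∧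
    (∀ T : ModuleCat.{0} A, IsSimpleModule A ↥T → ∃! i, Nonempty (↥T ≃ₗ[A] ↥(S i))) ∧
    IsInjEnvOf A (ModuleCat.of A (∀ i, ↥(S i))) Q

/-- The desuspending level of `M` is at most `d` :
`Σ^d M ∈ add (D(A) ⊕ Σ^{d+1} M')` for some finitely generated `M'`. -/
def DesLE (d : ℕ) (M : ModuleCat.{0} A) : Prop :=
  ∃ X, IsNthCosyzygy A d M X ∧
    ∃ Q, IsMinimalInjectiveCogenerator A Q ∧
      ∃ M' : ModuleCat.{0} A, Module.Finite A ↥M' ∧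
        ∃ X', IsNthCosyzygy A (d + 1) M' X' ∧ InAdd A X (ModuleCat.of A (↥Q × ↥X'))

/-- The desuspending level `des M ∈ ℕ∞`. -/
def desLevel (M : ModuleCat.{0} A) : ℕ∞ :=
  sInf {d : ℕ∞ | ∃ n : ℕ, d = n ∧ DesLE A n M}

/-- The desuspending level of the algebra. -/
def desAlg : ℕ∞ :=
  sSup {d : ℕ∞ | ∃ S : ModuleCat.{0} A, IsSimpleModule A ↥S ∧ desLevel A S = d}

/-- The (small) finitistic projective dimension `fin-pro A`. -/
def finProDim : ℕ∞ :=
  sSup {d : ℕ∞ | ∃ M : ModuleCat.{0} A, Module.Finite A ↥M ∧ projDim A M = d ∧ d ≠ ⊤}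

/-- The (small) finitistic injective dimension `fin-inj A`. -/
def finInjDim : ℕ∞ :=
  sSup {d : ℕ∞ | ∃ M : ModuleCat.{0} A, Module.Finite A ↥M ∧ injDim A M = d ∧ d ≠ ⊤}

/-- The big finitistic projective dimension `Fin-pro A`. -/
def bigFinProDim : ℕ∞ :=
  sSup {d : ℕ∞ | ∃ M : ModuleCat.{0} A, projDim A M = d ∧ d ≠ ⊤}

/-- The big finitistic injective dimension `Fin-inj A`. -/
def bigFinInjDim : ℕ∞ :=
  sSup {d : ℕ∞ | ∃ M : ModuleCat.{0} A, injDim A M = d ∧ d ≠ ⊤}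

/-- `M` is an indecomposable nonzero module. -/
def Indec (M : ModuleCat.{0} A) : Prop :=
  Nontrivial ↥M ∧ ∀ (N₁ N₂ : Submodule A ↥M), IsCompl N₁ N₂ → N₁ = ⊥ ∨ N₂ = ⊥

/-- `M` is serial (uniserial): its submodules form a chain. -/
def IsUniserial (M : ModuleCat.{0} A) : Prop :=
  ∀ N₁ N₂ : Submodule A ↥M, N₁ ≤ N₂ ∨ N₂ ≤ N₁

/-- `A` is a Nakayama algebra: all finitely generated indecomposable modules are serial. -/
def IsNakayama : Prop :=
  ∀ M : ModuleCat.{0} A, Module.Finite A ↥M → Indec A M → IsUniserial A M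

/-- `A` is connected: it is not a nontrivial product of algebras. -/
def IsConnectedAlgebra : Prop :=
  Nontrivial A ∧ ∀ e : A, IsIdempotentElem e → e ∈ Set.center A → e = 0 ∨ e = 1

/-- `A` is a cyclic Nakayama algebra: connected Nakayama with no simple projective module. -/
def IsCyclicNakayama : Prop :=
  IsNakayama A ∧ IsConnectedAlgebra A ∧
    ¬ ∃ S : ModuleCat.{0} A, IsSimpleModule A ↥S ∧ Projective S

/-- `T ≅ top M` (and `top M` is simple): there is an essential epimorphism `M ⟶ T`. -/
def IsSimpleTopOf (M T : ModuleCat.{0} A) : Prop :=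
  IsSimpleModule A ↥T ∧
    ∃ f : M ⟶ T, Epi f ∧ ∀ (N : ModuleCat.{0} A) (g : N ⟶ M), Epi (g ≫ f) → Epi g

/-- `S ≅ soc M` (and `soc M` is simple): there is an essential monomorphism `S ⟶ M`. -/
def IsSimpleSocOf (M S : ModuleCat.{0} A) : Prop :=
  IsSimpleModule A ↥S ∧
    ∃ f : S ⟶ M, Mono f ∧ ∀ (N : ModuleCat.{0} A) (g : M ⟶ N), Mono (f ≫ g) → Mono g

/-- `0 ⟶ N ⟶ E ⟶ M ⟶ 0` is an almost split (Auslander-Reiten) sequence. -/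
def IsAlmostSplitSeq {N E M : ModuleCat.{0} A} (f : N ⟶ E) (g : E ⟶ M) : Prop :=
  Mono f ∧ Epi g ∧ (∃ w : f ≫ g = 0, (ShortComplex.mk f g w).Exact) ∧
  (¬ ∃ s : M ⟶ E, s ≫ g = 𝟙 M) ∧ Indec A N ∧ Indec A M ∧
  ∀ (X : ModuleCat.{0} A) (h : X ⟶ M), (¬ ∃ s : M ⟶ X, s ≫ h = 𝟙 M) → ∃ h' : X ⟶ E, h' ≫ g = h

/-- `N ≅ τ M`, the Auslander-Reiten translate of `M` : there is an almost split sequence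
`0 ⟶ N ⟶ E ⟶ M ⟶ 0`. -/
def IsTauOf (N M : ModuleCat.{0} A) : Prop :=
  ∃ (E : ModuleCat.{0} A) (f : N ⟶ E) (g : E ⟶ M), IsAlmostSplitSeq A f g

/-- `U ≅ ψ S = τ⁻ top (I S)`. -/
def IsPsiOf (S U : ModuleCat.{0} A) : Prop :=
  ∃ I, IsInjEnvOf A S I ∧ ∃ T, IsSimpleTopOf A I T ∧ IsTauOf A T U

/-- `T ≅ γ S = τ soc (P S)`. -/
def IsGammaOf (S T : ModuleCat.{0} A) : Prop :=
  ∃ P, IsProjCoverOf A S P ∧ ∃ U, IsSimpleSocOf A P U ∧ IsTauOf A T U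

/-- `T ≅ φ S = top (I S)`. -/
def IsPhiOf (S T : ModuleCat.{0} A) : Prop :=
  ∃ I, IsInjEnvOf A S I ∧ IsSimpleTopOf A I T

/-- There is a `ψ`-path `(S_1, …, S_m)` of cardinality `m` ending in `S`. -/
def PsiPathTo (m : ℕ) (S : ModuleCat.{0} A) : Prop :=
  1 ≤ m ∧ ∃ c : ℕ → ModuleCat.{0} A,
    (∀ i < m, IsSimpleModule A ↥(c i)) ∧
    (∀ i, i + 1 < m → IsPsiOf A (c i) (c (i + 1))) ∧
    Nonempty (c (m - 1) ≅ S)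

/-- `a(S)`: the supremum of the cardinalities of `ψ`-paths ending in `S`. -/
def aVal (S : ModuleCat.{0} A) : ℕ∞ :=
  sSup {d : ℕ∞ | ∃ m : ℕ, d = m ∧ PsiPathTo A m S}

/-- `a(A)`: the maximum of `a(S)` over the simple modules which are not `ψ`-cyclic. -/
def aAlg : ℕ∞ :=
  sSup {d : ℕ∞ | ∃ S : ModuleCat.{0} A, IsSimpleModule A ↥S ∧ aVal A S ≠ ⊤ ∧ aVal A S = d}

/-- `S` is a composition factor of `M`: a simple subquotient of `M`. -/
def IsCompFactorOf (S M : ModuleCat.{0} A) : Prop :=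
  IsSimpleModule A ↥S ∧ ∃ N' N : Submodule A ↥M, N' ≤ N ∧
    Nonempty ((↥N ⧸ N'.comap N.subtype) ≃ₗ[A] ↥S)

/-- `e(S) = min {pd S, pd (I S)} = x`. -/
def ERelVal (S : ModuleCat.{0} A) (x : ℕ∞) : Prop :=
  ∃ I, IsInjEnvOf A S I ∧ x = min (projDim A S) (projDim A I)

/-- `e*(S) = min {id S, id (P S)} = x`. -/
def EStarVal (S : ModuleCat.{0} A) (x : ℕ∞) : Prop :=
  ∃ P, IsProjCoverOf A S P ∧ x = min (injDim A S) (injDim A P)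

/-- `T = h(S) = top (Ω^{e(S)} N S)`, the homological permutation. -/
def HRel (S T : ModuleCat.{0} A) : Prop :=
  IsSimpleModule A ↥S ∧ IsSimpleModule A ↥T ∧
  ∃ z : ℕ, ERelVal A S z ∧
    ∃ N, ((Odd z ∧ N = S) ∨ (Even z ∧ IsInjEnvOf A S N)) ∧
      ∃ X, IsNthSyzygy A z N X ∧ IsSimpleTopOf A X T

/-- `S = h*(T) = soc (Σ^{e*(T)} N* T)`, the inverse homological permutation. -/
def HStarRel (T S : ModuleCat.{0} A) : Prop :=
  IsSimpleModule A ↥T ∧ IsSimpleModule A ↥S ∧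
  ∃ z : ℕ, EStarVal A T z ∧
    ∃ N, ((Odd z ∧ N = T) ∨ (Even z ∧ IsProjCoverOf A T N)) ∧
      ∃ X, IsNthCosyzygy A z N X ∧ IsSimpleSocOf A X S

/-- The `t`-fold relational iterate of a relation on modules (up to isomorphism). -/
def IterRel (r : ModuleCat.{0} A → ModuleCat.{0} A → Prop) :
    ℕ → ModuleCat.{0} A → ModuleCat.{0} A → Prop
  | 0, X, Y => Nonempty (X ≅ Y)
  | n + 1, X, Y => ∃ Z, r X Z ∧ IterRel r n Z Y

end ArtinAlg

namespace SplitProof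

open ArtinAlg CategoryTheory CategoryTheory.Limits

variable {A : Type} [Ring A]

/-! ### Basic linear algebra helpers -/

/-- Descend a linear map along a surjection whose kernel it kills. -/
theorem descend_epi {P M T : Type} [AddCommGroup P] [AddCommGroup M] [AddCommGroup T]
    [Module A P] [Module A M] [Module A T]
    (p : P →ₗ[A] M) (hp : Function.Surjective p) (g : P →ₗ[A] T)
    (hker : ∀ x, p x = 0 → g x = 0) :
    ∃ u : M →ₗ[A] T, ∀ x, u (p x) = g x := by
  have key : ∀ x y : P, p x = p y → g x = g y := by
    intro x y h
    have h0 : g (x - y) = 0 := hker _ (by rw [map_sub, h, sub_self])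
    rw [map_sub, sub_eq_zero] at h0
    exact h0
  have hc : ∀ m, p (Classical.choose (hp m)) = m := fun m => Classical.choose_spec (hp m)
  refine ⟨{ toFun := fun m => g (Classical.choose (hp m)),
            map_add' := ?_, map_smul' := ?_ }, ?_⟩
  · intro m₁ m₂
    show g (Classical.choose (hp (m₁ + m₂)))
      = g (Classical.choose (hp m₁)) + g (Classical.choose (hp m₂))
    rw [← map_add g]
    exact key (Classical.choose (hp (m₁ + m₂)))
      (Classical.choose (hp m₁) + Classical.choose (hp m₂))
      (by simp only [map_add, hc])
  · intro a m
    show g (Classical.choose (hp (a • m))) = a • g (Classical.choose (hp m))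
    rw [← map_smul g]
    exact key (Classical.choose (hp (a • m))) (a • Classical.choose (hp m))
      (by simp only [map_smul, hc])
  · intro x
    show g (Classical.choose (hp (p x))) = g x
    exact key (Classical.choose (hp (p x))) x (hc (p x))

/-- Factor a linear map through an injection containing its range. -/
theorem factor_mono {Y I E : Type} [AddCommGroup Y] [AddCommGroup I] [AddCommGroup E]
    [Module A Y] [Module A I] [Module A E]
    (j : Y →ₗ[A] I) (hj : Function.Injective j) (g : E →ₗ[A] I)
    (hmem : ∀ e, g e ∈ LinearMap.range j) :
    ∃ u : E →ₗ[A] Y, ∀ e, j (u e) = g e := by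
  let e' := LinearEquiv.ofInjective j hj
  refine ⟨e'.symm.toLinearMap.comp (LinearMap.codRestrict (LinearMap.range j) g hmem),
    fun x => ?_⟩
  have hcoe : ∀ c : Y, ((e' c : ↥(LinearMap.range j)) : I) = j c := fun c => rfl
  calc j (e'.symm (LinearMap.codRestrict (LinearMap.range j) g hmem x))
      = ((e' (e'.symm (LinearMap.codRestrict (LinearMap.range j) g hmem x))
          : ↥(LinearMap.range j)) : I) := (hcoe _).symm
    _ = ((LinearMap.codRestrict (LinearMap.range j) g hmem x
          : ↥(LinearMap.range j)) : I) := by rw [e'.apply_symm_apply]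
    _ = g x := rfl

/-- Pointwise bijectivity of the `hom` of an isomorphism in `ModuleCat`. -/
theorem iso_hom_bijective {X Y : ModuleCat.{0} A} (e : X ≅ Y) :
    Function.Bijective e.hom.hom := by
  constructor
  · intro a b h
    have ha := e.hom_inv_id_apply a
    have hb := e.hom_inv_id_apply b
    calc a = e.inv (e.hom a) := ha.symm
    _ = e.inv (e.hom b) := by exact congrArg _ h
    _ = b := hb
  · intro y
    exact ⟨e.inv y, e.inv_hom_id_apply y⟩

/-- Extend a linear map into an injective object along an injection. -/
theorem extend_inj {I : ModuleCat.{0} A} (hI : Injective I)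
    {U V : Type} [AddCommGroup U] [AddCommGroup V] [Module A U] [Module A V]
    (a : U →ₗ[A] V) (ha : Function.Injective a) (f : U →ₗ[A] ↥I) :
    ∃ g : V →ₗ[A] ↥I, ∀ u, g (a u) = f u := by
  haveI := hI
  let a' : ModuleCat.of A U ⟶ ModuleCat.of A V := ModuleCat.ofHom a
  let f' : ModuleCat.of A U ⟶ I := ModuleCat.ofHom f
  haveI : Mono a' := (ModuleCat.mono_iff_injective a').mpr ha
  refine ⟨(Injective.factorThru f' a').hom, fun u => ?_⟩
  have h := Injective.comp_factorThru f' a'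
  exact DFunLike.congr_fun (congrArg ModuleCat.Hom.hom h) u

/-- Lift a linear map from a projective object through a surjection. -/
theorem lift_proj {P : ModuleCat.{0} A} (hP : Projective P)
    {V W : Type} [AddCommGroup V] [AddCommGroup W] [Module A V] [Module A W]
    (e : V →ₗ[A] W) (he : Function.Surjective e) (f : ↥P →ₗ[A] W) :
    ∃ g : ↥P →ₗ[A] V, ∀ x, e (g x) = f x := by
  haveI := hP
  let e' : ModuleCat.of A V ⟶ ModuleCat.of A W := ModuleCat.ofHom e
  let f' : P ⟶ ModuleCat.of A W := ModuleCat.ofHom f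
  haveI : Epi e' := (ModuleCat.epi_iff_surjective e').mpr he
  refine ⟨(Projective.factorThru f' e').hom, fun x => ?_⟩
  have h := Projective.factorThru_comp f' e'
  exact DFunLike.congr_fun (congrArg ModuleCat.Hom.hom h) x

/-! ### The splitting predicate -/

/-- Every short exact sequence `0 → C → E → S → 0` splits. -/
def Splt (S C : ModuleCat.{0} A) : Prop :=
  ∀ (E : Type) [AddCommGroup E] [Module A E],
    ∀ (i : ↥C →ₗ[A] E) (p : E →ₗ[A] ↥S),
    Function.Injective i → Function.Surjective p →
    LinearMap.range i = LinearMap.ker p →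
    ∃ s : ↥S →ₗ[A] E, ∀ x, p (s x) = x

theorem sec_of_ret {S E C : Type} [AddCommGroup S] [AddCommGroup E] [AddCommGroup C]
    [Module A S] [Module A E] [Module A C]
    (i : C →ₗ[A] E) (p : E →ₗ[A] S) (hp : Function.Surjective p)
    (hr : LinearMap.range i = LinearMap.ker p)
    (r : E →ₗ[A] C) (hri : ∀ c, r (i c) = c) :
    ∃ s : S →ₗ[A] E, ∀ x, p (s x) = x := by
  have hpi : ∀ c, p (i c) = 0 := by
    intro c
    have : i c ∈ LinearMap.ker p := hr ▸ LinearMap.mem_range_self i c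
    exact this
  set g : E →ₗ[A] E := LinearMap.id - i.comp r with hg
  have hker : ∀ x, p x = 0 → g x = 0 := by
    intro x hx
    have : x ∈ LinearMap.range i := by rw [hr]; exact hx
    obtain ⟨c, rfl⟩ := this
    simp [hg, hri c]
  obtain ⟨s₀, hs₀⟩ := descend_epi p hp g hker
  refine ⟨s₀, fun y => ?_⟩
  obtain ⟨x, rfl⟩ := hp y
  rw [hs₀ x]
  simp [hg, hpi]

theorem ret_of_sec {S E C : Type} [AddCommGroup S] [AddCommGroup E] [AddCommGroup C]
    [Module A S] [Module A E] [Module A C]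
    (i : C →ₗ[A] E) (p : E →ₗ[A] S) (hi : Function.Injective i)
    (hr : LinearMap.range i = LinearMap.ker p)
    (s : S →ₗ[A] E) (hs : ∀ x, p (s x) = x) :
    ∃ r : E →ₗ[A] C, ∀ c, r (i c) = c := by
  have hpi : ∀ c, p (i c) = 0 := by
    intro c
    have : i c ∈ LinearMap.ker p := hr ▸ LinearMap.mem_range_self i c
    exact this
  set g : E →ₗ[A] E := LinearMap.id - s.comp p with hg
  have hmem : ∀ e, g e ∈ LinearMap.range i := by
    intro e
    rw [hr]
    show p (g e) = 0
    simp [hg, hs]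
  obtain ⟨r, hrj⟩ := factor_mono i hi g hmem
  refine ⟨r, fun c => ?_⟩
  apply hi
  rw [hrj (i c)]
  simp [hg, hpi]

/-- The universal lifting lemma: if `Splt Z C` holds then any map `Z → S` lifts
through a surjection `E → S` with kernel `C`. -/
theorem lift_of_splt {C S Z : ModuleCat.{0} A} {E : Type} [AddCommGroup E] [Module A E]
    (i : ↥C →ₗ[A] E) (p : E →ₗ[A] ↥S) (hi : Function.Injective i)
    (hp : Function.Surjective p) (hr : LinearMap.range i = LinearMap.ker p)
    (h : Splt Z C) (f : ↥Z →ₗ[A] ↥S) :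
    ∃ t : ↥Z →ₗ[A] E, ∀ z, p (t z) = f z := by
  have hpi : ∀ c, p (i c) = 0 := by
    intro c
    have : i c ∈ LinearMap.ker p := hr ▸ LinearMap.mem_range_self i c
    exact this
  set D : Submodule A (E × ↥Z) :=
    LinearMap.ker ((p.comp (LinearMap.fst A E ↥Z)) - f.comp (LinearMap.snd A E ↥Z)) with hD
  have hmemD : ∀ x : E × ↥Z, x ∈ D ↔ p x.1 = f x.2 := by
    intro x
    simp [hD, LinearMap.mem_ker, sub_eq_zero]
  have hiD0 : ∀ c : ↥C, ((i c, 0) : E × ↥Z) ∈ D := by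
    intro c
    rw [hmemD]
    simp [hpi c]
  set iD : ↥C →ₗ[A] ↥D :=
    LinearMap.codRestrict D ((i.prod (0 : ↥C →ₗ[A] ↥Z))) (fun c => hiD0 c) with hiDdef
  set q : ↥D →ₗ[A] ↥Z := (LinearMap.snd A E ↥Z).comp D.subtype with hq
  have hiDinj : Function.Injective iD := by
    intro c₁ c₂ hcc
    apply hi
    have := congrArg (fun d : ↥D => (d : E × ↥Z).1) hcc
    exact this
  have hqsurj : Function.Surjective q := by
    intro z
    obtain ⟨e, he⟩ := hp (f z)
    exact ⟨⟨(e, z), (hmemD _).2 he⟩, rfl⟩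
  have hrange : LinearMap.range iD = LinearMap.ker q := by
    ext d
    constructor
    · rintro ⟨c, rfl⟩
      show ((((i c, 0) : E × ↥Z)).2 : ↥Z) = 0
      rfl
    · intro hd
      obtain ⟨⟨e, z⟩, hez⟩ := d
      have hz : z = 0 := hd
      subst hz
      have : p e = 0 := by rw [(hmemD _).1 hez]; simp
      have : e ∈ LinearMap.range i := by rw [hr]; exact this
      obtain ⟨c, rfl⟩ := this
      exact ⟨c, rfl⟩
  obtain ⟨s, hs⟩ := h ↥D iD q hiDinj hqsurj hrange
  refine ⟨((LinearMap.fst A E ↥Z).comp D.subtype).comp s, fun z => ?_⟩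
  have hmem := (hmemD ((s z) : E × ↥Z)).1 (s z).2
  show p ((s z) : E × ↥Z).1 = f z
  rw [hmem]
  exact congrArg f (hs z)

/-- The universal extension lemma: if `Splt M Q` holds then any map `X → Q` extends
along an injection `X → P` with cokernel `M`. -/
theorem extend_of_splt {Q M : ModuleCat.{0} A} {X P : Type}
    [AddCommGroup X] [AddCommGroup P] [Module A X] [Module A P]
    (ι : X →ₗ[A] P) (p : P →ₗ[A] ↥M) (hι : Function.Injective ι)
    (hp : Function.Surjective p) (hr : LinearMap.range ι = LinearMap.ker p)
    (h : Splt M Q) (φ : X →ₗ[A] ↥Q) :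
    ∃ ψ : P →ₗ[A] ↥Q, ∀ x, ψ (ι x) = φ x := by
  have hpι : ∀ x, p (ι x) = 0 := by
    intro x
    have : ι x ∈ LinearMap.ker p := hr ▸ LinearMap.mem_range_self ι x
    exact this
  set W : Submodule A (↥Q × P) := LinearMap.range (φ.prod (-ι)) with hW
  set j : ↥Q →ₗ[A] ((↥Q × P) ⧸ W) := W.mkQ.comp (LinearMap.inl A ↥Q P) with hj
  have hker : ∀ y ∈ W, (p.comp (LinearMap.snd A ↥Q P)) y = 0 := by
    rintro y ⟨x, rfl⟩
    show p (-ι x) = 0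
    rw [map_neg, hpι x, neg_zero]
  set π : ((↥Q × P) ⧸ W) →ₗ[A] ↥M :=
    Submodule.liftQ W (p.comp (LinearMap.snd A ↥Q P)) hker with hπ
  have hπmk : ∀ y : ↥Q × P, π (W.mkQ y) = p y.2 := fun y => rfl
  have hjinj : Function.Injective j := by
    intro q₁ q₂ hq
    have h0 : j (q₁ - q₂) = 0 := by rw [map_sub, hq, sub_self]
    have : ((q₁ - q₂, 0) : ↥Q × P) ∈ W := by
      rwa [hj, LinearMap.comp_apply, Submodule.mkQ_apply, Submodule.Quotient.mk_eq_zero] at h0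
    obtain ⟨x, hx⟩ := this
    have hx1 : φ x = q₁ - q₂ := congrArg Prod.fst hx
    have hx2 : -ι x = 0 := congrArg Prod.snd hx
    have hx0 : x = 0 := by
      apply hι
      rw [map_zero, ← neg_eq_zero]
      exact hx2
    rw [hx0, map_zero] at hx1
    rw [← sub_eq_zero, ← hx1]
  have hπsurj : Function.Surjective π := by
    intro m
    obtain ⟨u, hu⟩ := hp m
    exact ⟨W.mkQ (0, u), by rw [hπmk]; exact hu⟩
  have hrange : LinearMap.range j = LinearMap.ker π := by
    ext d
    constructor
    · rintro ⟨c, rfl⟩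
      show π (W.mkQ (c, 0)) = 0
      rw [hπmk, map_zero]
    · intro hd
      obtain ⟨⟨qq, u⟩, rfl⟩ := W.mkQ_surjective d
      have hu : p u = 0 := by rwa [LinearMap.mem_ker, hπmk] at hd
      have : u ∈ LinearMap.range ι := by rw [hr]; exact hu
      obtain ⟨x, rfl⟩ := this
      refine ⟨qq + φ x, ?_⟩
      show W.mkQ (qq + φ x, 0) = W.mkQ (qq, ι x)
      rw [Submodule.mkQ_apply, Submodule.mkQ_apply, Submodule.Quotient.eq]
      exact ⟨x, by ext <;> simp⟩
  obtain ⟨s, hs⟩ := h ((↥Q × P) ⧸ W) j π hjinj hπsurj hrange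
  obtain ⟨r, hrr⟩ := ret_of_sec j π hjinj hrange s hs
  refine ⟨r.comp (W.mkQ.comp (LinearMap.inr A ↥Q P)), fun x => ?_⟩
  show r (W.mkQ (0, ι x)) = φ x
  have : W.mkQ (0, ι x) = W.mkQ (φ x, 0) := by
    rw [Submodule.mkQ_apply, Submodule.mkQ_apply, Submodule.Quotient.eq]
    exact ⟨-x, by ext <;> simp⟩
  rw [this]
  exact hrr (φ x)

/-! ### Closure properties of `Splt` -/

theorem splt_of_injective {S C : ModuleCat.{0} A} (hC : Injective C) : Splt S C := by
  intro E _ _ i p hi hp hr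
  obtain ⟨r, hri⟩ := extend_inj hC i hi (LinearMap.id : ↥C →ₗ[A] ↥C)
  exact sec_of_ret i p hp hr r hri

theorem splt_iso_left {S S' C : ModuleCat.{0} A} (e : S ≅ S') (h : Splt S C) :
    Splt S' C := by
  intro E _ _ i p hi hp hr
  have hbij := iso_hom_bijective e.symm
  set p₂ : E →ₗ[A] ↥S := e.symm.hom.hom.comp p with hp₂
  have hker : LinearMap.ker p₂ = LinearMap.ker p := by
    ext x
    constructor
    · intro hx
      have : e.symm.hom (p x) = 0 := hx
      have := hbij.1 (by rw [this, map_zero] : e.symm.hom (p x) = e.symm.hom 0)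
      exact this
    · intro hx
      show e.symm.hom (p x) = 0
      rw [show p x = 0 from hx, map_zero]
  obtain ⟨s₂, hs₂⟩ := h E i p₂ hi (hbij.2.comp hp) (hr.trans hker.symm)
  refine ⟨s₂.comp e.symm.hom.hom, fun y => ?_⟩
  apply hbij.1
  exact hs₂ (e.symm.hom y)

theorem splt_iso_right {S C C' : ModuleCat.{0} A} (e : C ≅ C') (h : Splt S C) :
    Splt S C' := by
  intro E _ _ i p hi hp hr
  have hbij := iso_hom_bijective e
  set i₂ : ↥C →ₗ[A] E := i.comp e.hom.hom with hi₂
  have hrange : LinearMap.range i₂ = LinearMap.range i := by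
    rw [hi₂, LinearMap.range_comp, LinearMap.range_eq_top.mpr hbij.2, Submodule.map_top]
  exact h E i₂ p (hi.comp hbij.1) hp (hrange.trans hr)

theorem splt_of_projective {S C : ModuleCat.{0} A} (hS : Projective S) : Splt S C := by
  intro E _ _ i p hi hp hr
  exact lift_proj hS p hp LinearMap.id

theorem splt_ring (C : ModuleCat.{0} A) : Splt (ModuleCat.of A A) C := by
  have hproj : Projective (ModuleCat.of A A) :=
    (IsProjective.iff_projective A).1 inferInstance
  exact splt_of_projective hproj

theorem splt_prod {W₁ W₂ C : ModuleCat.{0} A} (h₁ : Splt W₁ C) (h₂ : Splt W₂ C) :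
    Splt (ModuleCat.of A (↥W₁ × ↥W₂)) C := by
  intro E _ _ i p hi hp hr
  obtain ⟨t₁, ht₁⟩ := lift_of_splt (S := ModuleCat.of A (↥W₁ × ↥W₂)) i p hi hp hr h₁
    (LinearMap.inl A ↥W₁ ↥W₂)
  obtain ⟨t₂, ht₂⟩ := lift_of_splt (S := ModuleCat.of A (↥W₁ × ↥W₂)) i p hi hp hr h₂
    (LinearMap.inr A ↥W₁ ↥W₂)
  refine ⟨t₁.comp (LinearMap.fst A ↥W₁ ↥W₂) + t₂.comp (LinearMap.snd A ↥W₁ ↥W₂),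
    fun x => ?_⟩
  show p (t₁ x.1 + t₂ x.2) = x
  rw [map_add, ht₁, ht₂]
  show ((x.1, 0) : ↥W₁ × ↥W₂) + ((0, x.2) : ↥W₁ × ↥W₂) = x
  exact Prod.ext (by simp) (by simp)

theorem splt_pi {W C : ModuleCat.{0} A} (h : Splt W C) (n : ℕ) :
    Splt (ModuleCat.of A (Fin n → ↥W)) C := by
  intro E _ _ i p hi hp hr
  choose t ht using fun k : Fin n =>
    lift_of_splt (S := ModuleCat.of A (Fin n → ↥W)) i p hi hp hr h
      (LinearMap.single A (fun _ : Fin n => ↥W) k)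
  refine ⟨∑ k : Fin n, (t k).comp (LinearMap.proj k), fun g => ?_⟩
  rw [LinearMap.sum_apply, map_sum]
  have h1 : ∀ k : Fin n, p (((t k).comp (LinearMap.proj k)) g)
      = LinearMap.single A (fun _ : Fin n => ↥W) k (g k) := by
    intro k
    exact ht k (g k)
  rw [Finset.sum_congr rfl (fun k _ => h1 k)]
  show (∑ k : Fin n, Pi.single k (g k) : Fin n → ↥W) = g
  exact Finset.univ_sum_single g

theorem splt_summand {X Y C : ModuleCat.{0} A} (hsum : IsDirectSummandOf A X Y)
    (h : Splt Y C) : Splt X C := by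
  obtain ⟨i', r', hir⟩ := hsum
  have hpt : ∀ x, r' (i' x) = x := by
    intro x
    have := DFunLike.congr_fun (congrArg ModuleCat.Hom.hom hir) x
    exact this
  intro E _ _ i p hi hp hr
  obtain ⟨t, ht⟩ := lift_of_splt i p hi hp hr h r'.hom
  refine ⟨t.comp i'.hom, fun x => ?_⟩
  show p (t (i' x)) = x
  rw [ht, hpt]

/-! ### SES data from syzygies and cosyzygies -/

theorem syzygy_ses {Z X : ModuleCat.{0} A} (h : IsSyzygyOf A Z X) :
    ∃ (P : ModuleCat.{0} A), Projective P ∧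
      ∃ (ι : ↥X →ₗ[A] ↥P) (p : ↥P →ₗ[A] ↥Z),
      Function.Injective ι ∧ Function.Surjective p ∧
      LinearMap.range ι = LinearMap.ker p := by
  obtain ⟨P, f, ⟨hP, hf, _⟩, ⟨e⟩⟩ := h
  haveI := hf
  refine ⟨P, hP, (kernel.ι f).hom.comp e.hom.hom,
    f.hom, ?_, (ModuleCat.epi_iff_surjective f).1 hf, ?_⟩
  · have h1 : Function.Injective (kernel.ι f) :=
      (ModuleCat.mono_iff_injective (kernel.ι f)).1 inferInstance
    exact h1.comp (iso_hom_bijective e).1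
  · have hkι : LinearMap.range (kernel.ι f).hom = LinearMap.ker f.hom := by
      have h2 := ModuleCat.kernelIsoKer_hom_ker_subtype f
      have h3 : (kernel.ι f).hom
          = (LinearMap.ker f.hom).subtype.comp ((ModuleCat.kernelIsoKer f).hom.hom) := by
        rw [← h2]; rfl
      rw [h3, LinearMap.range_comp,
        LinearMap.range_eq_top.mpr (iso_hom_bijective (ModuleCat.kernelIsoKer f)).2,
        Submodule.map_top, Submodule.range_subtype]
    rw [LinearMap.range_comp,
      LinearMap.range_eq_top.mpr (iso_hom_bijective e).2, Submodule.map_top, hkι]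

theorem cosyzygy_ses {Y I : ModuleCat.{0} A} (f : Y ⟶ I) (hf : Mono f) :
    Function.Injective f.hom ∧
    Function.Surjective (cokernel.π f).hom ∧
    LinearMap.range f.hom = LinearMap.ker (cokernel.π f).hom := by
  haveI := hf
  refine ⟨(ModuleCat.mono_iff_injective f).1 hf,
    (ModuleCat.epi_iff_surjective (cokernel.π f)).1 inferInstance, ?_⟩
  have h2 := ModuleCat.cokernel_π_cokernelIsoRangeQuotient_hom f
  have h3 : ∀ x : ↥I, (ModuleCat.cokernelIsoRangeQuotient f).hom ((cokernel.π f) x)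
      = (LinearMap.range f.hom).mkQ x := fun x => DFunLike.congr_fun (congrArg ModuleCat.Hom.hom h2) x
  ext x
  constructor
  · rintro ⟨y, rfl⟩
    show (cokernel.π f) (f y) = 0
    have h4 := cokernel.condition f
    have := DFunLike.congr_fun (congrArg ModuleCat.Hom.hom h4) y
    exact this
  · intro hx
    have h5 : (LinearMap.range f.hom).mkQ x = 0 := by
      rw [← h3]
      have : (cokernel.π f) x = 0 := hx
      rw [this, map_zero]
    rwa [Submodule.mkQ_apply, Submodule.Quotient.mk_eq_zero] at h5

/-! ### Dimension-shifting lemmas -/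

theorem forward_shift {X P M Y I SY : ModuleCat.{0} A}
    (ι : ↥X →ₗ[A] ↥P) (p : ↥P →ₗ[A] ↥M)
    (hι : Function.Injective ι) (hp : Function.Surjective p)
    (hιp : LinearMap.range ι = LinearMap.ker p) (hP : Projective P)
    (j : ↥Y →ₗ[A] ↥I) (π : ↥I →ₗ[A] ↥SY)
    (hj : Function.Injective j) (hπ : Function.Surjective π)
    (hjπ : LinearMap.range j = LinearMap.ker π) (hI : Injective I)
    (h : Splt M SY) : Splt X Y := by
  intro E _ _ iY pZ hiY hpZ hr
  have hpZiY : ∀ y, pZ (iY y) = 0 := by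
    intro y
    have : iY y ∈ LinearMap.ker pZ := hr ▸ LinearMap.mem_range_self iY y
    exact this
  have hπj : ∀ y, π (j y) = 0 := by
    intro y
    have : j y ∈ LinearMap.ker π := hjπ ▸ LinearMap.mem_range_self j y
    exact this
  obtain ⟨hEI, hh⟩ := extend_inj hI iY hiY j
  obtain ⟨φ, hφ⟩ := descend_epi pZ hpZ (π.comp hEI) (by
    intro e he
    have : e ∈ LinearMap.range iY := by rw [hr]; exact he
    obtain ⟨y, rfl⟩ := this
    show π (hEI (iY y)) = 0
    rw [hh, hπj])
  have hφ2 : ∀ e, φ (pZ e) = π (hEI e) := fun e => hφ e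
  obtain ⟨ψ, hψ⟩ := extend_of_splt ι p hι hp hιp h φ
  obtain ⟨ψ', hψ'⟩ := lift_proj hP π hπ ψ
  set θ : ↥X →ₗ[A] ↥I := ψ'.comp ι with hθ
  set g : E →ₗ[A] ↥I := hEI - θ.comp pZ with hgdef
  have hmem : ∀ e, g e ∈ LinearMap.range j := by
    intro e
    rw [hjπ]
    show π (hEI e - ψ' (ι (pZ e))) = 0
    rw [map_sub, hψ', hψ, ← hφ2 e, sub_self]
  obtain ⟨u, hu⟩ := factor_mono j hj g hmem
  have hret : ∀ y, u (iY y) = y := by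
    intro y
    apply hj
    rw [hu (iY y)]
    show hEI (iY y) - ψ' (ι (pZ (iY y))) = j y
    rw [hh, hpZiY, map_zero, map_zero, sub_zero]
  exact sec_of_ret iY pZ hpZ hr u hret

theorem reverse_shift {X P M Y I SY : ModuleCat.{0} A}
    (ι : ↥X →ₗ[A] ↥P) (p : ↥P →ₗ[A] ↥M)
    (hι : Function.Injective ι) (hp : Function.Surjective p)
    (hιp : LinearMap.range ι = LinearMap.ker p) (hP : Projective P)
    (j : ↥Y →ₗ[A] ↥I) (π : ↥I →ₗ[A] ↥SY)
    (hj : Function.Injective j) (hπ : Function.Surjective π)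
    (hjπ : LinearMap.range j = LinearMap.ker π) (hI : Injective I)
    (h : Splt X Y) : Splt M SY := by
  intro E _ _ inc pM hinc hpM hr
  have hpι : ∀ x, p (ι x) = 0 := by
    intro x
    have : ι x ∈ LinearMap.ker p := hιp ▸ LinearMap.mem_range_self ι x
    exact this
  have hpMinc : ∀ z, pM (inc z) = 0 := by
    intro z
    have : inc z ∈ LinearMap.ker pM := hr ▸ LinearMap.mem_range_self inc z
    exact this
  obtain ⟨g, hg⟩ := lift_proj hP pM hpM p
  obtain ⟨φ', hφ'⟩ := factor_mono inc hinc (g.comp ι) (by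
    intro x
    rw [hr]
    show pM (g (ι x)) = 0
    rw [hg, hpι])
  have hφ2 : ∀ x, inc (φ' x) = g (ι x) := fun x => hφ' x
  obtain ⟨t, ht⟩ := lift_of_splt j π hj hπ hjπ h φ'
  obtain ⟨t', ht'⟩ := extend_inj hI ι hι t
  set g' : ↥P →ₗ[A] E := g - inc.comp (π.comp t') with hg'def
  have hkill : ∀ u, p u = 0 → g' u = 0 := by
    intro u hu
    have : u ∈ LinearMap.range ι := by rw [hιp]; exact hu
    obtain ⟨x, rfl⟩ := this
    show g (ι x) - inc (π (t' (ι x))) = 0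
    rw [ht', ht, hφ2, sub_self]
  obtain ⟨h₂, hh₂⟩ := descend_epi p hp g' hkill
  refine ⟨h₂, fun m => ?_⟩
  obtain ⟨u, rfl⟩ := hp m
  rw [hh₂ u]
  show pM (g u - inc (π (t' u))) = p u
  rw [map_sub, hg, hpMinc, sub_zero]

/-! ### Cosyzygy chains -/

/-- `W` is a `k`-th cosyzygy of `Y` along some chain of embeddings into injectives. -/
def Cosyz : ℕ → ModuleCat.{0} A → ModuleCat.{0} A → Prop
  | 0, Y, W => Nonempty (Y ≅ W)
  | k + 1, Y, W => ∃ (I : ModuleCat.{0} A) (f : Y ⟶ I),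
      Injective I ∧ Mono f ∧ Cosyz k (cokernel f) W

theorem cosyz_iso_left : ∀ {k : ℕ} {Y Y' W : ModuleCat.{0} A},
    (Y ≅ Y') → Cosyz k Y W → Cosyz k Y' W := by
  intro k
  induction k with
  | zero =>
    rintro Y Y' W e ⟨e0⟩
    exact ⟨e.symm.trans e0⟩
  | succ k ih =>
    rintro Y Y' W e ⟨I, f, hI, hf, hc⟩
    haveI := hf
    exact ⟨I, e.inv ≫ f, hI, inferInstance, ih (cokernelEpiComp e.inv f).symm hc⟩

theorem injDimLE_of_cosyz : ∀ {k : ℕ} {Y W : ModuleCat.{0} A},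
    Cosyz k Y W → Injective W → InjDimLE A k Y := by
  intro k
  induction k with
  | zero =>
    rintro Y W ⟨e⟩ hW
    exact InjDimLE.zero Y (Injective.of_iso e.symm hW)
  | succ k ih =>
    rintro Y W ⟨I, f, hI, hf, hc⟩ hW
    exact InjDimLE.succ k Y I f hI hf (ih hc hW)

theorem cosyz_of_injDimLE : ∀ {k : ℕ} {Y : ModuleCat.{0} A},
    InjDimLE A k Y → ∃ W, Cosyz k Y W ∧ Injective W := by
  intro k
  induction k with
  | zero =>
    intro Y h
    cases h with
    | zero M h0 => exact ⟨Y, ⟨Iso.refl Y⟩, h0⟩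
  | succ k ih =>
    intro Y h
    cases h with
    | succ n M I f hI hf h' =>
      obtain ⟨W, hc, hW⟩ := ih h'
      exact ⟨W, ⟨I, f, hI, hf, hc⟩, hW⟩

theorem cosyz_trans : ∀ (a b : ℕ) {Y U V : ModuleCat.{0} A},
    Cosyz a Y U → Cosyz b U V → Cosyz (a + b) Y V := by
  intro a
  induction a with
  | zero =>
    rintro b Y U V ⟨e⟩ h2
    rw [Nat.zero_add]
    exact cosyz_iso_left e.symm h2
  | succ a ih =>
    rintro b Y U V ⟨I, f, hI, hf, hc⟩ h2
    rw [Nat.succ_add]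
    exact ⟨I, f, hI, hf, ih b hc h2⟩

theorem cosyz_split : ∀ (a b : ℕ) {Y V : ModuleCat.{0} A},
    Cosyz (a + b) Y V → ∃ U, Cosyz a Y U ∧ Cosyz b U V := by
  intro a
  induction a with
  | zero =>
    intro b Y V h
    rw [Nat.zero_add] at h
    exact ⟨Y, ⟨Iso.refl Y⟩, h⟩
  | succ a ih =>
    intro b Y V h
    rw [Nat.succ_add] at h
    obtain ⟨I, f, hI, hf, hc⟩ := h
    obtain ⟨U, h1, h2⟩ := ih b hc
    exact ⟨U, ⟨I, f, hI, hf, h1⟩, h2⟩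

/-! ### Syzygy chains -/

theorem nthSyzygy_split : ∀ {j : ℕ} {M X : ModuleCat.{0} A},
    IsNthSyzygy A (j + 1) M X → ∃ Z, IsNthSyzygy A j M Z ∧ IsSyzygyOf A Z X := by
  intro j
  induction j with
  | zero =>
    rintro M X ⟨Y', h1, h2⟩
    obtain ⟨e⟩ := h2
    obtain ⟨P, f, hcov, ⟨e0⟩⟩ := h1
    exact ⟨M, ⟨Iso.refl M⟩, P, f, hcov, ⟨e.trans e0⟩⟩
  | succ j ih =>
    rintro M X ⟨Y', h1, h2⟩
    obtain ⟨Z, hZ1, hZ2⟩ := ih h2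
    exact ⟨Z, ⟨Y', h1, hZ1⟩, hZ2⟩

/-! ### The two iterated shift lemmas -/

theorem fs : ∀ (j : ℕ) {M X Y : ModuleCat.{0} A},
    IsNthSyzygy A j M X → InjDimLE A j Y → Splt X Y := by
  intro j
  induction j with
  | zero =>
    intro M X Y _ h
    cases h with
    | zero M0 h0 => exact splt_of_injective h0
  | succ j ih =>
    intro M X Y hs h
    obtain ⟨Z, hZ, hsyz⟩ := nthSyzygy_split hs
    obtain ⟨P, hP, ι, pz, hι, hpz, hr⟩ := syzygy_ses hsyz
    cases h with
    | succ n M0 I f hI hf h' =>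
      obtain ⟨hjinj, hπsurj, hjr⟩ := cosyzygy_ses f hf
      exact forward_shift ι pz hι hpz hr hP f.hom
        (cokernel.π f).hom hjinj hπsurj hjr hI (ih hZ h')

theorem rs : ∀ (e : ℕ) {S X U V : ModuleCat.{0} A},
    IsNthSyzygy A e S X → Cosyz e U V → Splt X U → Splt S V := by
  intro e
  induction e with
  | zero =>
    intro S X U V h1 h2 h3
    obtain ⟨e1⟩ := h1
    obtain ⟨e2⟩ := h2
    exact splt_iso_right e2 (splt_iso_left e1 h3)
  | succ e ih =>
    intro S X U V h1 h2 h3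
    obtain ⟨Z, hZ, hsyz⟩ := nthSyzygy_split h1
    obtain ⟨P, hP, ι, pz, hι, hpz, hr⟩ := syzygy_ses hsyz
    obtain ⟨I, f, hI, hf, hc⟩ := h2
    obtain ⟨hjinj, hπsurj, hjr⟩ := cosyzygy_ses f hf
    have h4 : Splt Z (cokernel f) := reverse_shift ι pz hι hpz hr hP f.hom
      (cokernel.π f).hom hjinj hπsurj hjr hI h3
    exact ih hZ hc h4

/-! ### Baer's criterion via simple extensions -/

theorem injective_of_simples_split (hart : IsArtinian A A) (C : ModuleCat.{0} A)
    (hs : ∀ S : ModuleCat.{0} A, IsSimpleModule A ↥S → Splt S C) : Injective C := by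
  classical
  haveI := hart
  have hBaer : Module.Baer A ↥C := by
    intro L f
    set Gf : Submodule A (A × ↥C) := LinearMap.range ((L.subtype).prod f) with hGf
    set Sgr : Set (Submodule A (A × ↥C)) :=
      {G | Gf ≤ G ∧ ∀ c : ↥C, ((0 : A), c) ∈ G → c = 0} with hSgr
    have hGf_mem : Gf ∈ Sgr := by
      refine ⟨le_refl _, ?_⟩
      intro c h
      obtain ⟨x, hx⟩ := h
      have hx1 : ((x : A)) = 0 := congrArg Prod.fst hx
      have hx2 : f x = c := congrArg Prod.snd hx
      have hx0 : x = 0 := Subtype.ext hx1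
      rw [← hx2, hx0, map_zero]
    obtain ⟨G₁, hGfG₁, hmax⟩ := zorn_le_nonempty₀ Sgr (by
      intro c hcs hchain y hy
      refine ⟨sSup c, ⟨le_trans (hcs hy).1 (le_sSup hy), ?_⟩, fun z hz => le_sSup hz⟩
      intro c0 hc0
      obtain ⟨G, hG, hmem⟩ := (Submodule.mem_sSup_of_directed ⟨y, hy⟩ hchain.directedOn).1 hc0
      exact (hcs hG).2 c0 hmem) Gf hGf_mem
    obtain ⟨hGfle, hgood⟩ := hmax.1
    set dom : Ideal A := G₁.map (LinearMap.fst A A ↥C) with hdom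
    have huniq : ∀ (a : A) (c c' : ↥C), (a, c) ∈ G₁ → (a, c') ∈ G₁ → c = c' := by
      intro a c c' h1 h2
      have h3 : ((0 : A), c - c') ∈ G₁ := by
        have h4 := G₁.sub_mem h1 h2
        simpa using h4
      have h5 := hgood _ h3
      rwa [sub_eq_zero] at h5
    have hex : ∀ x : ↥dom, ∃ cc : ↥C, ((x : A), cc) ∈ G₁ := by
      rintro ⟨x, hx⟩
      rw [hdom, Submodule.mem_map] at hx
      obtain ⟨⟨a, cc⟩, hac, ha⟩ := hx
      simp only [LinearMap.fst_apply] at ha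
      subst ha
      exact ⟨cc, hac⟩
    set g0 : ↥dom → ↥C := fun x => Classical.choose (hex x) with hg0
    have hg0spec : ∀ x : ↥dom, ((x : A), g0 x) ∈ G₁ := fun x => Classical.choose_spec (hex x)
    have hadd : ∀ x y : ↥dom, g0 (x + y) = g0 x + g0 y := by
      intro x y
      refine huniq ((x : A) + (y : A)) _ _ ?_ ?_
      · have h4 := hg0spec (x + y)
        simpa using h4
      · have h4 := G₁.add_mem (hg0spec x) (hg0spec y)
        simpa using h4
    have hsmul : ∀ (a : A) (x : ↥dom), g0 (a • x) = a • g0 x := by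
      intro a x
      refine huniq (a • (x : A)) _ _ ?_ ?_
      · have h4 := hg0spec (a • x)
        simpa using h4
      · have h4 := G₁.smul_mem a (hg0spec x)
        simpa using h4
    set g : ↥dom →ₗ[A] ↥C :=
      { toFun := g0, map_add' := hadd, map_smul' := fun a x => hsmul a x } with hgdef
    have hLdom : L ≤ dom := by
      intro x hx
      exact ⟨(x, f ⟨x, hx⟩), hGfle ⟨⟨x, hx⟩, rfl⟩, rfl⟩
    have hgf : ∀ (x : A) (hx : x ∈ L), g ⟨x, hLdom hx⟩ = f ⟨x, hx⟩ := by
      intro x hx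
      exact huniq x _ _ (hg0spec ⟨x, hLdom hx⟩) (hGfle ⟨⟨x, hx⟩, rfl⟩)
    by_cases hdomtop : dom = ⊤
    · refine ⟨g.comp (LinearMap.codRestrict dom LinearMap.id
        (fun a => hdomtop ▸ Submodule.mem_top)), ?_⟩
      intro x hx
      exact hgf x hx
    · exfalso
      haveI : Nontrivial (A ⧸ dom) :=
        (Submodule.Quotient.nontrivial_iff (p := dom)).mpr hdomtop
      obtain ⟨Tbar, hTbar_mem, hTbar_min⟩ := IsArtinian.set_has_minimal
        {N : Submodule A (A ⧸ dom) | N ≠ ⊥} ⟨⊤, top_ne_bot⟩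
      have hatom : IsAtom Tbar :=
        ⟨hTbar_mem, fun b hb => by_contra fun hb0 => hTbar_min b hb0 hb⟩
      haveI hTsimple : IsSimpleModule A ↥Tbar := isSimpleModule_iff_isAtom.2 hatom
      set L₁ : Ideal A := Tbar.comap dom.mkQ with hL₁
      have hdomle : dom ≤ L₁ := by
        intro x hx
        have h4 : dom.mkQ x = 0 := by
          rw [Submodule.mkQ_apply, Submodule.Quotient.mk_eq_zero]
          exact hx
        refine Submodule.mem_comap.mpr ?_
        rw [h4]
        exact Tbar.zero_mem
      have hne : ¬ (L₁ ≤ dom) := by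
        intro hle
        apply hTbar_mem
        rw [eq_bot_iff]
        rintro t ht
        obtain ⟨a, rfl⟩ := Submodule.mkQ_surjective dom t
        have haL₁ : a ∈ L₁ := Submodule.mem_comap.mpr ht
        have hadom : a ∈ dom := hle haL₁
        rw [Submodule.mem_bot, Submodule.mkQ_apply, Submodule.Quotient.mk_eq_zero]
        exact hadom
      set K : Submodule A ↥L₁ := Submodule.comap L₁.subtype dom with hK
      set ψ : ↥L₁ →ₗ[A] (A ⧸ dom) := (dom.mkQ).comp L₁.subtype with hψ
      have hkerψ : LinearMap.ker ψ = K := by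
        ext y
        simp [hψ, hK, LinearMap.mem_ker, Submodule.mkQ_apply,
          Submodule.Quotient.mk_eq_zero, Submodule.mem_comap]
      have hrangeψ : LinearMap.range ψ = Tbar := by
        rw [hψ, LinearMap.range_comp, Submodule.range_subtype]
        exact Submodule.map_comap_eq_of_surjective (Submodule.mkQ_surjective dom) Tbar
      have hQtequiv : (↥L₁ ⧸ K) ≃ₗ[A] ↥Tbar :=
        (Submodule.quotEquivOfEq K (LinearMap.ker ψ) hkerψ.symm).trans
          ((ψ.quotKerEquivRange).trans (LinearEquiv.ofEq _ _ hrangeψ))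
      haveI hQtsimple : IsSimpleModule A (↥L₁ ⧸ K) := IsSimpleModule.congr hQtequiv
      have hsplt := hs (ModuleCat.of A (↥L₁ ⧸ K)) hQtsimple
      have hses : LinearMap.range (Submodule.inclusion hdomle) = LinearMap.ker K.mkQ := by
        rw [Submodule.ker_mkQ]
        ext y
        constructor
        · rintro ⟨x, rfl⟩
          exact Submodule.mem_comap.mpr x.2
        · intro hy
          exact ⟨⟨(y : A), Submodule.mem_comap.mp hy⟩, Subtype.ext rfl⟩
      obtain ⟨ψ₂, hψ₂⟩ := extend_of_splt (Q := C) (M := ModuleCat.of A (↥L₁ ⧸ K))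
        (Submodule.inclusion hdomle) K.mkQ (Submodule.inclusion_injective hdomle)
        (Submodule.mkQ_surjective K) hses hsplt g
      set G₂ : Submodule A (A × ↥C) := LinearMap.range ((L₁.subtype).prod ψ₂) with hG₂
      have hG₂good : ∀ c : ↥C, ((0 : A), c) ∈ G₂ → c = 0 := by
        intro c h
        obtain ⟨y, hy⟩ := h
        have hy1 : ((y : A)) = 0 := congrArg Prod.fst hy
        have hy2 : ψ₂ y = c := congrArg Prod.snd hy
        have hy0 : y = 0 := Subtype.ext hy1
        rw [← hy2, hy0, map_zero]
      have hG₁G₂ : G₁ ≤ G₂ := by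
        rintro ⟨a, c⟩ hy
        have hadom : a ∈ dom := ⟨(a, c), hy, rfl⟩
        have hc : c = g ⟨a, hadom⟩ := huniq a _ _ hy (hg0spec ⟨a, hadom⟩)
        refine ⟨⟨a, hdomle hadom⟩, ?_⟩
        have h5 : ψ₂ ⟨a, hdomle hadom⟩ = g ⟨a, hadom⟩ := hψ₂ ⟨a, hadom⟩
        show ((a, ψ₂ ⟨a, hdomle hadom⟩) : A × ↥C) = (a, c)
        rw [h5, ← hc]
      have hG₂mem : G₂ ∈ Sgr := ⟨le_trans hGfle hG₁G₂, hG₂good⟩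
      obtain ⟨b, hbL₁, hbdom⟩ : ∃ b, b ∈ L₁ ∧ b ∉ dom := by
        by_contra hbc
        push_neg at hbc
        exact hne (fun x hx => hbc x hx)
      have hb2 : ((b, ψ₂ ⟨b, hbL₁⟩) : A × ↥C) ∈ G₂ := ⟨⟨b, hbL₁⟩, rfl⟩
      have hb1 : ((b, ψ₂ ⟨b, hbL₁⟩) : A × ↥C) ∉ G₁ := fun hmem => hbdom ⟨_, hmem, rfl⟩
      exact hb1 (hmax.2 hG₂mem hG₁G₂ hb2)
  haveI hinj : Module.Injective A ↥C := hBaer.injective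
  have h2 : Injective (ModuleCat.of A ↥C) := Module.injective_object_of_injective_module A ↥C
  exact Injective.of_iso (Iso.refl C) h2

/-! ### The main inductive step -/

theorem main_step (hart : IsArtinian A A) (m : ℕ)
    (HD : ∀ S : ModuleCat.{0} A, IsSimpleModule A ↥S → ∃ e, e ≤ m ∧ DelLE A e S)
    (Y : ModuleCat.{0} A) (h : InjDimLE A (m + 1) Y) : InjDimLE A m Y := by
  obtain ⟨Wtop, hc, hW⟩ := cosyz_of_injDimLE h
  obtain ⟨V, hYV, hVW⟩ := cosyz_split m 1 hc
  refine injDimLE_of_cosyz hYV ?_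
  apply injective_of_simples_split hart
  intro S hS
  obtain ⟨e, he, hDel⟩ := HD S hS
  obtain ⟨X, hX, M', hM', X', hX', hadd⟩ := hDel
  have hsplitm : Cosyz (m - e + e) Y V := by
    rw [Nat.sub_add_cancel he]
    exact hYV
  obtain ⟨U, hYU, hUV⟩ := cosyz_split (m - e) e hsplitm
  have hUW : Cosyz (e + 1) U Wtop := cosyz_trans e 1 hUV hVW
  have hU : InjDimLE A (e + 1) U := injDimLE_of_cosyz hUW hW
  have h1 : Splt X' U := fs (e + 1) hX' hU
  have h2 : Splt (ModuleCat.of A A) U := splt_ring U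
  have h3 : Splt (ModuleCat.of A (A × ↥X')) U := splt_prod h2 h1
  obtain ⟨n, hsummand⟩ := hadd
  have h4 : Splt (ModuleCat.of A (Fin n → ↥(ModuleCat.of A (A × ↥X')))) U := splt_pi h3 n
  have h5 : Splt X U := splt_summand hsummand h4
  exact rs e hX hUV h5

/-! ### `ℕ∞` infima are attained -/

theorem enat_sInf_mem {s : Set ℕ∞} (h : sInf s ≠ ⊤) : sInf s ∈ s := by
  classical
  have hex : ∃ n : ℕ, (n : ℕ∞) ∈ s := by
    by_contra hc
    push_neg at hc
    apply h
    refine sInf_eq_top.2 ?_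
    intro a ha
    revert ha
    induction a using ENat.recTopCoe with
    | top => intro _; rfl
    | coe n => intro ha; exact absurd ha (hc n)
  have hspec : (↑(Nat.find hex) : ℕ∞) ∈ s := Nat.find_spec hex
  have heq : sInf s = ↑(Nat.find hex) := by
    refine le_antisymm (sInf_le hspec) (le_sInf ?_)
    intro b hb
    revert hb
    induction b using ENat.recTopCoe with
    | top => intro _; exact le_top
    | coe k => intro hb; exact_mod_cast Nat.find_min' hex hb
  rw [heq]
  exact hspec

end SplitProof


open ArtinAlg in
/-- For any artin algebra `A` one has `Fin-inj A ≤ del A`: the big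
finitistic injective dimension of `A` is at most the delooping level of `A`. -/
theorem statement_1 (R : Type) [CommRing R] [IsArtinianRing R]
    (A : Type) [Ring A] [Algebra R A] [Module.Finite R A] :
    bigFinInjDim A ≤ delAlg A := by
  classical
  have hRA : IsArtinian R A := isArtinian_of_fg_of_artinian'
  have hart : IsArtinian A A := isArtinian_of_tower R hRA
  apply sSup_le
  rintro d ⟨M, hdim, hne⟩
  have hnetop : sInf {d : ℕ∞ | ∃ n : ℕ, d = n ∧ InjDimLE A n M} ≠ ⊤ := by
    rw [show sInf {d : ℕ∞ | ∃ n : ℕ, d = n ∧ InjDimLE A n M} = injDim A M from rfl, hdim]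
    exact hne
  have hmem := SplitProof.enat_sInf_mem hnetop
  obtain ⟨n, hdn, hLE⟩ := hmem
  have hdn' : d = (n : ℕ∞) := by
    rw [← hdim]
    exact hdn
  have hmin : ∀ k : ℕ, InjDimLE A k M → (n : ℕ∞) ≤ (k : ℕ∞) := by
    intro k hk
    rw [← hdn]
    exact sInf_le ⟨k, rfl, hk⟩
  cases n with
  | zero =>
    rw [hdn']
    exact le_of_eq_of_le (by exact_mod_cast rfl) zero_le
  | succ m =>
    by_contra hcon
    have hlt : delAlg A < ((m + 1 : ℕ) : ℕ∞) := by
      rw [hdn'] at hcon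
      exact not_le.mp hcon
    have hle : delAlg A ≤ (m : ℕ∞) := by
      have hcast : ((m + 1 : ℕ) : ℕ∞) = (m : ℕ∞) + 1 := by push_cast; ring
      rw [hcast] at hlt
      exact (ENat.lt_add_one_iff (ENat.coe_ne_top m)).mp hlt
    have HD : ∀ S : ModuleCat.{0} A, IsSimpleModule A ↥S → ∃ e, e ≤ m ∧ DelLE A e S := by
      intro S hS
      have hmemd : delLevel A S ∈ {d : ℕ∞ | ∃ S' : ModuleCat.{0} A,
          IsSimpleModule A ↥S' ∧ delLevel A S' = d} := ⟨S, hS, rfl⟩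
      have h1 : delLevel A S ≤ (m : ℕ∞) := le_trans (le_sSup hmemd) hle
      have h2 : sInf {d : ℕ∞ | ∃ n : ℕ, d = n ∧ DelLE A n S} ≠ ⊤ := by
        intro ht
        rw [show sInf {d : ℕ∞ | ∃ n : ℕ, d = n ∧ DelLE A n S} = delLevel A S from rfl] at ht
        rw [ht] at h1
        exact absurd h1 (by simp)
      obtain ⟨e, hee, hDel⟩ := SplitProof.enat_sInf_mem h2
      refine ⟨e, ?_, hDel⟩
      have h3 : (e : ℕ∞) ≤ (m : ℕ∞) := by
        rw [← hee]
        exact h1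
      exact_mod_cast h3
    have hstep := SplitProof.main_step hart m HD M hLE
    have h4 := hmin m hstep
    exact absurd h4 (by exact_mod_cast Nat.not_succ_le_self m)
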